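/- Let d ≥ 1 and let G be a standard Gaussian random vector in ℝ^d (G ~ N(0, I_d)). Then P(|G|² ≤ d) ≥ 1/2; equivalently, the median of the chi-squared distribution with d degrees of freedom is at most d, and for every σ > 0, ∫_{{u ∈ ℝ^d : |u| ≤ σ√d}} exp(−|u|²/(2σ²)) du ≥ (1/2)(2π)^{d/2} σ^d. -/

import Mathlib

open MeasureTheory
open Real Set Metric
open scoped ENNReal


lemma log_le_half_sub (s : ℝ) (hs : 1 ≤ s) : Real.log s ≤ (s - 1/s)/2 := by
  have h0 : (0:ℝ) ≤ Real.log s := Real.log_nonneg hs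
  have := Real.self_le_sinh_iff.mpr h0
  rw [Real.sinh_log (by linarith : (0:ℝ) < s)] at this; rw [one_div]; exact this

lemma pow_le_exp_key (n : ℕ) (s : ℝ) (hs : 1 ≤ s) :
    s ^ n ≤ Real.exp (((n:ℝ)/2) * (s - 1/s)) := by
  have hspos : (0:ℝ) < s := by linarith
  have h1 : (n:ℝ) * Real.log s ≤ ((n:ℝ)/2) * (s - 1/s) := by
    have := log_le_half_sub s hs
    have hn : (0:ℝ) ≤ n := Nat.cast_nonneg n
    nlinarith [Real.log_nonneg hs]
  calc s ^ n = Real.exp ((n:ℝ) * Real.log s) := by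
        rw [← Real.log_pow, Real.exp_log (by positivity)]
    _ ≤ _ := Real.exp_le_exp.mpr h1


lemma pointwise_key (n : ℕ) (σ u : ℝ) (hσ : 0 < σ) (hu : 0 < u)
    (huR : u^2 ≤ ((n:ℝ)+1) * σ^2) :
    (((n:ℝ)+1)*σ^2/u^2) * ((((n:ℝ)+1)*σ^2/u)^n * Real.exp (-(((n:ℝ)+1)*σ^2/u)^2/(2*σ^2))) ≤
      u^n * Real.exp (-u^2/(2*σ^2)) := by
  set D : ℝ := ((n:ℝ)+1)*σ^2 with hD
  have hDpos : 0 < D := by positivity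
  set s : ℝ := D/u^2 with hs_def
  have hs : 1 ≤ s := (one_le_div (by positivity)).mpr huR
  set x : ℝ := (((n:ℝ)+1)/2)*(s - 1/s) with hx
  have hexp_id : -(D/u)^2/(2*σ^2) = -u^2/(2*σ^2) + (-x) := by
    rw [hx, hs_def, hD]; field_simp; ring
  have hcoef : D/u^2 * (D/u)^n = u^n * s^(n+1) := by
    have e : u*(D/u^2) = D/u := by rw [sq, ← mul_div_assoc, mul_div_mul_left D u hu.ne']
    rw [hs_def, pow_succ (D/u^2) n, ← mul_assoc, ← mul_pow, e]; ring
  have h2 : s^(n+1) ≤ Real.exp x := by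
    have := pow_le_exp_key (n+1) s hs
    rw [hx]; push_cast at this ⊢; exact this
  have hfac : s^(n+1) * Real.exp (-x) ≤ 1 := by
    calc s^(n+1) * Real.exp (-x) ≤ Real.exp x * Real.exp (-x) :=
          mul_le_mul_of_nonneg_right h2 (Real.exp_pos _).le
      _ = 1 := by rw [← Real.exp_add]; simp
  calc D/u^2 * ((D/u)^n * Real.exp (-(D/u)^2/(2*σ^2)))
      = (u^n * Real.exp (-u^2/(2*σ^2))) * (s^(n+1) * Real.exp (-x)) := by
        rw [hexp_id, Real.exp_add]
        linear_combination (Real.exp (-u^2/(2*σ^2)) * Real.exp (-x)) * hcoef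
    _ ≤ (u^n * Real.exp (-u^2/(2*σ^2))) * 1 :=
        mul_le_mul_of_nonneg_left hfac (by positivity)
    _ = u^n * Real.exp (-u^2/(2*σ^2)) := mul_one _


lemma tail_le_head (n : ℕ) (σ : ℝ) (hσ : 0 < σ) :
    ∫ r in Ioi (σ * Real.sqrt (n+1)), r^n * Real.exp (-r^2/(2*σ^2)) ≤
      ∫ r in Ioc 0 (σ * Real.sqrt (n+1)), r^n * Real.exp (-r^2/(2*σ^2)) := by
  set R : ℝ := σ * Real.sqrt (n+1) with hRdef
  have hRpos : 0 < R := by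
    have : (0:ℝ) < Real.sqrt (n+1) := Real.sqrt_pos.mpr (by positivity)
    positivity
  set D : ℝ := ((n:ℝ)+1)*σ^2 with hD
  have hDpos : 0 < D := by positivity
  have hR2 : R^2 = D := by
    rw [hRdef, mul_pow, Real.sq_sqrt (by positivity : (0:ℝ) ≤ (n:ℝ)+1)]
    ring
  set g : ℝ → ℝ := fun r => r^n * Real.exp (-r^2/(2*σ^2)) with hg
  have hgcont : Continuous g := by fun_prop
  -- image
  have himg : (fun u : ℝ => D/u) '' Ioo 0 R = Ioi R := by
    ext y
    constructor
    · rintro ⟨u, ⟨hu0, huR⟩, rfl⟩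
      have : R = D / R := by rw [eq_div_iff hRpos.ne']; nlinarith
      simp only [mem_Ioi]
      rw [this]
      exact div_lt_div_of_pos_left hDpos hu0 huR
    · intro hy
      have hy' : R < y := hy
      refine ⟨D/y, ⟨div_pos hDpos (lt_trans hRpos hy'), ?_⟩, ?_⟩
      · rw [div_lt_iff₀ (by linarith)]
        nlinarith
      · field_simp
  have hderiv : ∀ u ∈ Ioo (0:ℝ) R, HasDerivWithinAt (fun u : ℝ => D/u) (-(D/u^2)) (Ioo 0 R) u := by
    intro u hu
    have hu0 : u ≠ 0 := ne_of_gt hu.1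
    have h := ((hasDerivAt_inv hu0).const_mul D)
    simpa [div_eq_mul_inv, neg_div, mul_div_assoc] using h.hasDerivWithinAt
  have hinj : InjOn (fun u : ℝ => D/u) (Ioo 0 R) := by
    intro a ha b hb h
    have ha0 : a ≠ 0 := ne_of_gt ha.1
    have hb0 : b ≠ 0 := ne_of_gt hb.1
    field_simp at h
    exact h.symm
  have hsub := integral_image_eq_integral_abs_deriv_smul measurableSet_Ioo hderiv hinj g
  rw [himg] at hsub
  rw [hsub]
  rw [integral_Ioc_eq_integral_Ioo]
  -- integrability of g on Ioo 0 R
  have hgint : IntegrableOn g (Ioo 0 R) := (hgcont.integrableOn_Icc (a := 0) (b := R)).mono_set Ioo_subset_Icc_self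
  -- the substituted integrand
  have hptwise : ∀ u ∈ Ioo (0:ℝ) R, |(-(D/u^2))| • g (D/u) ≤ g u := by
    intro u hu
    have hu0 : 0 < u := hu.1
    have habs : |(-(D/u^2))| = D/u^2 := by
      rw [abs_neg, abs_of_pos (by positivity)]
    rw [habs, smul_eq_mul, hg]
    have huR2 : u^2 ≤ ((n:ℝ)+1) * σ^2 := by nlinarith [hu.2, hu.1]
    simpa [hD] using pointwise_key n σ u hσ hu0 huR2
  have hmeas : AEStronglyMeasurable (fun u => |(-(D/u^2))| • g (D/u)) (volume.restrict (Ioo 0 R)) := by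
    apply ContinuousOn.aestronglyMeasurable _ measurableSet_Ioo
    apply ContinuousOn.fun_smul
    · apply ContinuousOn.abs
      apply ContinuousOn.neg
      apply ContinuousOn.div continuousOn_const (continuousOn_pow 2)
      intro x hx; exact pow_ne_zero 2 (ne_of_gt hx.1)
    · exact hgcont.comp_continuousOn
        (continuousOn_const.div continuousOn_id (fun x hx => ne_of_gt hx.1))
  have hint2 : IntegrableOn (fun u => |(-(D/u^2))| • g (D/u)) (Ioo 0 R) := by
    apply Integrable.mono' hgint hmeas
    filter_upwards [ae_restrict_mem measurableSet_Ioo] with u hu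
    rw [Real.norm_eq_abs, abs_of_nonneg]
    · exact hptwise u hu
    · have hDu : 0 < D/u := div_pos hDpos hu.1
      rw [smul_eq_mul, hg]
      exact mul_nonneg (abs_nonneg _)
        (mul_nonneg (pow_nonneg hDu.le n) (Real.exp_pos _).le)
  exact setIntegral_mono_on hint2 hgint measurableSet_Ioo hptwise

lemma gauss_integrable (d : ℕ) (σ : ℝ) (hσ : 0 < σ) :
    Integrable (fun u : EuclideanSpace ℝ (Fin d) => Real.exp (-‖u‖^2/(2*σ^2))) := by
  set E := EuclideanSpace ℝ (Fin d)
  have hb : (0:ℝ) < (2*σ^2)⁻¹ := by positivity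
  have hbre : (0:ℝ) < ((((2*σ^2)⁻¹ : ℝ)) : ℂ).re := by rw [Complex.ofReal_re]; exact hb
  have h := (GaussianFourier.integrable_cexp_neg_mul_sq_norm_add
    (V := E) (b := ((((2*σ^2)⁻¹ : ℝ)) : ℂ)) hbre 0 0).norm
  apply h.congr
  filter_upwards with u
  have hz : -((((2*σ^2)⁻¹ : ℝ)) : ℂ) * (‖u‖ : ℂ)^2 + 0 * ((inner ℝ (0:E) u : ℝ) : ℂ)
      = (((-‖u‖^2/(2*σ^2) : ℝ)) : ℂ) := by push_cast; ring
  rw [hz, Complex.norm_exp, Complex.ofReal_re]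


lemma ball_integral_ge (d : ℕ) (hd : 1 ≤ d) (σ : ℝ) (hσ : 0 < σ) :
    (1/2) * (2*Real.pi) ^ ((d:ℝ)/2) * σ^d ≤
      ∫ u in closedBall (0 : EuclideanSpace ℝ (Fin d)) (σ * Real.sqrt d),
        Real.exp (-‖u‖^2/(2*σ^2)) := by
  haveI : Nonempty (Fin d) := ⟨⟨0, hd⟩⟩
  set E := EuclideanSpace ℝ (Fin d)
  haveI : Nontrivial E := inferInstance
  set R : ℝ := σ * Real.sqrt d with hRdef
  have hRpos : 0 < R := by
    have : (0:ℝ) < Real.sqrt d := Real.sqrt_pos.mpr (by exact_mod_cast Nat.pos_of_ne_zero (by omega))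
    positivity
  have hb : (0:ℝ) < (2*σ^2)⁻¹ := by positivity
  -- total integral
  have hT : ∫ u : E, Real.exp (-‖u‖^2/(2*σ^2)) = (2*Real.pi) ^ ((d:ℝ)/2) * σ^d := by
    have h1 : (fun u : E => Real.exp (-‖u‖^2/(2*σ^2)))
        = fun u : E => Real.exp (-(2*σ^2)⁻¹ * ‖u‖^2) := by
      funext u; ring_nf
    rw [h1, GaussianFourier.integral_rexp_neg_mul_sq_norm hb]
    rw [finrank_euclideanSpace_fin]
    have h2 : Real.pi / (2*σ^2)⁻¹ = (2*Real.pi) * σ^2 := by field_simp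
    rw [h2, Real.mul_rpow (by positivity) (by positivity)]
    congr 1
    rw [← Real.rpow_natCast σ 2, ← Real.rpow_mul hσ.le, ← Real.rpow_natCast σ d]
    congr 1
    push_cast
    ring
  have hInt := gauss_integrable d σ hσ
  obtain ⟨n, rfl⟩ : ∃ n, d = n + 1 := ⟨d - 1, (Nat.succ_pred_eq_of_pos hd).symm⟩
  set gexp : ℝ → ℝ := fun r => Real.exp (-r^2/(2*σ^2)) with hgexp
  have hpolar : ∀ f : ℝ → ℝ, ∫ x : E, f ‖x‖ =
      ((n+1 : ℕ) : ℝ) * (volume (ball (0:E) 1)).toReal *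
        ∫ y in Ioi (0:ℝ), y ^ n * f y := by
    intro f
    have h := integral_fun_norm_addHaar (volume : Measure E) f
    rw [finrank_euclideanSpace_fin] at h
    simpa [nsmul_eq_mul, smul_eq_mul, mul_assoc, measureReal_def] using h
  set c : ℝ := ((n+1 : ℕ) : ℝ) * (volume (ball (0:E) 1)).toReal with hc
  have hcnn : 0 ≤ c := by positivity
  have hhead : ∫ u in closedBall (0:E) R, Real.exp (-‖u‖^2/(2*σ^2)) =
      c * ∫ y in Ioc 0 R, y ^ n * gexp y := by
    have h1 : (fun x : E => Set.indicator (Iic R) gexp ‖x‖)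
        = Set.indicator (closedBall (0:E) R) (fun u => Real.exp (-‖u‖^2/(2*σ^2))) := by
      funext x
      simp only [Set.indicator, Set.mem_Iic, mem_closedBall_zero_iff, hgexp]
    calc ∫ u in closedBall (0:E) R, Real.exp (-‖u‖^2/(2*σ^2))
        = ∫ x : E, Set.indicator (Iic R) gexp ‖x‖ := by
          rw [h1, integral_indicator measurableSet_closedBall]
      _ = c * ∫ y in Ioi 0, y ^ n * Set.indicator (Iic R) gexp y := hpolar _
      _ = c * ∫ y in Ioc 0 R, y ^ n * gexp y := by
          congr 1
          have h2 : ∀ y : ℝ, y ^ n * Set.indicator (Iic R) gexp y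
              = Set.indicator (Iic R) (fun y => y ^ n * gexp y) y := by
            intro y
            simp [Set.indicator_apply, mul_ite]
          simp_rw [h2]
          rw [setIntegral_indicator measurableSet_Iic, Set.Ioi_inter_Iic]
  have htail : ∫ u in (closedBall (0:E) R)ᶜ, Real.exp (-‖u‖^2/(2*σ^2)) =
      c * ∫ y in Ioi R, y ^ n * gexp y := by
    have h1 : (fun x : E => Set.indicator (Ioi R) gexp ‖x‖)
        = Set.indicator (closedBall (0:E) R)ᶜ (fun u => Real.exp (-‖u‖^2/(2*σ^2))) := by
      funext x
      simp only [Set.indicator, Set.mem_Ioi, Set.mem_compl_iff, mem_closedBall_zero_iff, hgexp,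
        not_le]
    calc ∫ u in (closedBall (0:E) R)ᶜ, Real.exp (-‖u‖^2/(2*σ^2))
        = ∫ x : E, Set.indicator (Ioi R) gexp ‖x‖ := by
          rw [h1, integral_indicator measurableSet_closedBall.compl]
      _ = c * ∫ y in Ioi 0, y ^ n * Set.indicator (Ioi R) gexp y := hpolar _
      _ = c * ∫ y in Ioi R, y ^ n * gexp y := by
          congr 1
          have h2 : ∀ y : ℝ, y ^ n * Set.indicator (Ioi R) gexp y
              = Set.indicator (Ioi R) (fun y => y ^ n * gexp y) y := by
            intro y
            simp [Set.indicator_apply, mul_ite]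
          simp_rw [h2]
          rw [setIntegral_indicator measurableSet_Ioi, Set.Ioi_inter_Ioi,
            max_eq_right hRpos.le]
  have hsplit := integral_add_compl measurableSet_closedBall hInt
    (f := fun u : E => Real.exp (-‖u‖^2/(2*σ^2))) (s := closedBall (0:E) R)
  have hcompare : ∫ u in (closedBall (0:E) R)ᶜ, Real.exp (-‖u‖^2/(2*σ^2)) ≤
      ∫ u in closedBall (0:E) R, Real.exp (-‖u‖^2/(2*σ^2)) := by
    rw [hhead, htail]
    apply mul_le_mul_of_nonneg_left _ hcnn
    have h := tail_le_head n σ hσ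
    have hcast : ((n:ℝ) + 1) = ((n+1 : ℕ) : ℝ) := by push_cast; ring
    rw [hcast] at h
    exact h
  linarith [hsplit, hT.symm]


theorem gaussian_ball_mass_at_least_half
    (d : ℕ) (hd : 1 ≤ d) :
    ((volume.withDensity fun u : EuclideanSpace ℝ (Fin d) =>
        ENNReal.ofReal ((2 * Real.pi) ^ (-(d : ℝ) / 2) * Real.exp (-‖u‖ ^ 2 / 2)))
      {u : EuclideanSpace ℝ (Fin d) | ‖u‖ ^ 2 ≤ (d : ℝ)} ≥ 1 / 2) ∧
    ∀ σ : ℝ, 0 < σ →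
      (1 / 2) * (2 * Real.pi) ^ ((d : ℝ) / 2) * σ ^ (d : ℕ) ≤
        ∫ u in {u : EuclideanSpace ℝ (Fin d) | ‖u‖ ≤ σ * Real.sqrt d},
          Real.exp (-‖u‖ ^ 2 / (2 * σ ^ 2)) := by
  have hP : (0:ℝ) < (2*Real.pi) ^ ((d:ℝ)/2) := Real.rpow_pos_of_pos (by positivity) _
  constructor
  · -- Part 1
    have hSball : {u : EuclideanSpace ℝ (Fin d) | ‖u‖ ^ 2 ≤ (d : ℝ)}
        = closedBall (0 : EuclideanSpace ℝ (Fin d)) (Real.sqrt d) := by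
      ext u
      simp only [mem_setOf_eq, mem_closedBall_zero_iff]
      exact (Real.le_sqrt (norm_nonneg u) (Nat.cast_nonneg d)).symm
    have hfun : (fun u : EuclideanSpace ℝ (Fin d) => Real.exp (-‖u‖^2/(2*(1:ℝ)^2)))
        = fun u => Real.exp (-‖u‖^2/2) := by
      funext u; norm_num
    have hIntOn : IntegrableOn
        (fun u : EuclideanSpace ℝ (Fin d) =>
          (2 * Real.pi) ^ (-(d : ℝ) / 2) * Real.exp (-‖u‖ ^ 2 / 2))
        (closedBall (0 : EuclideanSpace ℝ (Fin d)) (Real.sqrt d)) := by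
      have h := (gauss_integrable d 1 one_pos)
      rw [hfun] at h
      exact (h.const_mul _).integrableOn
    have hmain : (1:ℝ)/2 ≤ ∫ u in closedBall (0 : EuclideanSpace ℝ (Fin d)) (Real.sqrt d),
        (2 * Real.pi) ^ (-(d : ℝ) / 2) * Real.exp (-‖u‖ ^ 2 / 2) := by
      rw [integral_const_mul]
      have hB := ball_integral_ge d hd 1 one_pos
      rw [one_mul, hfun] at hB
      have hstep : (2 * Real.pi) ^ (-(d : ℝ) / 2) * ((1/2) * (2*Real.pi) ^ ((d:ℝ)/2) * 1^d)
          ≤ (2 * Real.pi) ^ (-(d : ℝ) / 2) *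
            ∫ u in closedBall (0 : EuclideanSpace ℝ (Fin d)) (Real.sqrt d),
              Real.exp (-‖u‖ ^ 2 / 2) :=
        mul_le_mul_of_nonneg_left hB (Real.rpow_nonneg (by positivity) _)
      refine le_trans (le_of_eq ?_) hstep
      rw [show -(d:ℝ)/2 = -((d:ℝ)/2) by ring, Real.rpow_neg (by positivity)]
      field_simp
      simp
    rw [hSball, withDensity_apply _ measurableSet_closedBall,
      ← ofReal_integral_eq_lintegral_ofReal hIntOn]
    · rw [show (1/2 : ℝ≥0∞) = ENNReal.ofReal (1/2) by
        rw [ENNReal.ofReal_div_of_pos (by norm_num)]; norm_num]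
      exact ENNReal.ofReal_le_ofReal hmain
    · filter_upwards with u
      positivity
  · -- Part 2
    intro σ hσ
    have hSball : {u : EuclideanSpace ℝ (Fin d) | ‖u‖ ≤ σ * Real.sqrt d}
        = closedBall (0 : EuclideanSpace ℝ (Fin d)) (σ * Real.sqrt d) := by
      ext u
      simp [mem_closedBall_zero_iff]
    rw [hSball]
    exact ball_integral_ge d hd σ hσ
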